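/- arXiv:1902.00523 — 5 statements merged into one kernel-verified Lean document; each statement's English description precedes it below -/
import Mathlib

section
/- A soft set F with parameter set A over the universe U is a terminal object in the category of soft sets over U (i.e., for every soft set G with parameter set B over U there exists exactly one soft morphism from (B, G) to (A, F)) if and only if A has exactly one element and F is the absolute soft set, i.e., F(a) = U for every a ∈ A. -/
/-- A soft morphism from a soft set `(A, F)` to a soft set `(B, G)` over the universe `U`
is a function `α : A → B` such that `F a ⊆ G (α a)` for every `a`. -/
def IsSoftMorphism {U A B : Type} (F : A → Set U) (G : B → Set U) (α : A → B) : Prop :=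
  ∀ a : A, F a ⊆ G (α a)

/-- A soft set `(A, F)` over `U` is a terminal object in the category of soft sets over `U`
(for every soft set `(B, G)` there is exactly one soft morphism from `(B, G)` to `(A, F)`)
if and only if `A` has exactly one element and `F` is the absolute soft set. -/
theorem softSet_terminal_iff {U A : Type} (F : A → Set U) :
    (∀ (B : Type) (G : B → Set U), ∃! α : B → A, IsSoftMorphism G F α) ↔
      ((Nonempty A ∧ Subsingleton A) ∧ ∀ a : A, F a = Set.univ) := by
  constructor
  · intro h
    obtain ⟨α₀, hα₀, _⟩ := h Unit (fun _ => Set.univ)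
    obtain ⟨β, hβ, huniq⟩ := h Unit (fun _ => (∅ : Set U))
    have hsub : Subsingleton A := by
      constructor
      intro a b
      have ha := huniq (fun _ => a) (fun _ _ h => absurd h (Set.notMem_empty _))
      have hb := huniq (fun _ => b) (fun _ _ h => absurd h (Set.notMem_empty _))
      calc a = β () := congrFun ha ()
        _ = b := (congrFun hb ()).symm
    refine ⟨⟨⟨α₀ ()⟩, hsub⟩, fun a => ?_⟩
    have : a = α₀ () := Subsingleton.elim _ _
    rw [this]
    exact Set.eq_univ_of_univ_subset (hα₀ ())
  · rintro ⟨⟨⟨a₀⟩, hsub⟩, habs⟩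
    intro B G
    refine ⟨fun _ => a₀, fun b => by rw [habs]; exact Set.subset_univ _, ?_⟩
    intro γ _
    funext b
    exact Subsingleton.elim _ _
end

section
/- A soft set H with parameter set C over the universe U is a separator in the category of soft sets over U if and only if C is nonempty and H is the null soft set, i.e., H(c) = ∅ for every c ∈ C. Here (C, H) is a separator means: whenever α, β are soft morphisms from a soft set (A, F) to a soft set (B, G) over U with α ≠ β, there exists a soft morphism γ from (C, H) to (A, F) such that α ∘ γ ≠ β ∘ γ. -/
/-- A soft set `(C, H)` over `U` is a separator in the category of soft sets over `U`
if and only if `C` is nonempty and `H` is the null soft set. -/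
theorem softSet_separator_iff {U C : Type} (H : C → Set U) :
    (∀ (A B : Type) (F : A → Set U) (G : B → Set U) (α β : A → B),
        IsSoftMorphism F G α → IsSoftMorphism F G β → α ≠ β →
        ∃ γ : C → A, IsSoftMorphism H F γ ∧ α ∘ γ ≠ β ∘ γ) ↔
      (Nonempty C ∧ ∀ c : C, H c = ∅) := by
  constructor
  · intro h
    obtain ⟨γ, hγ, hne⟩ := h Bool Bool (fun _ => ∅) (fun _ => ∅) id not
      (fun a => by simp) (fun a => by simp)
      (fun heq => by simpa using congrFun heq true)
    obtain ⟨c, _⟩ := Function.ne_iff.mp hne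
    exact ⟨⟨c⟩, fun c => Set.subset_empty_iff.mp (hγ c)⟩
  · rintro ⟨⟨c₀⟩, hnull⟩ A B F G α β hα hβ hne
    obtain ⟨a, ha⟩ := Function.ne_iff.mp hne
    exact ⟨fun _ => a, fun c => by rw [hnull c]; exact Set.empty_subset _,
      fun heq => ha (congrFun heq c₀)⟩
end

section
/- A soft set H with parameter set C over the universe U is a co-separator in the category of soft sets over U if and only if there exist c₁, c₂ ∈ C with c₁ ≠ c₂ and H(c₁) = H(c₂) = U. Here (C, H) is a co-separator means: whenever α, β are soft morphisms from a soft set (A, F) to a soft set (B, G) over U with α ≠ β, there exists a soft morphism γ from (B, G) to (C, H) such that γ ∘ α ≠ γ ∘ β. -/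
/-- A soft set `(C, H)` over `U` is a co-separator in the category of soft sets over `U`
if and only if there exist distinct `c₁ c₂ ∈ C` with `H c₁ = H c₂ = U`. -/
theorem softSet_coseparator_iff {U C : Type} (H : C → Set U) :
    (∀ (A B : Type) (F : A → Set U) (G : B → Set U) (α β : A → B),
        IsSoftMorphism F G α → IsSoftMorphism F G β → α ≠ β →
        ∃ γ : B → C, IsSoftMorphism G H γ ∧ γ ∘ α ≠ γ ∘ β) ↔
      (∃ c₁ c₂ : C, c₁ ≠ c₂ ∧ H c₁ = Set.univ ∧ H c₂ = Set.univ) := by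
  constructor
  · intro h
    obtain ⟨γ, hγ, hne⟩ := h Unit Bool (fun _ => ∅) (fun _ => Set.univ)
      (fun _ => true) (fun _ => false)
      (fun _ => Set.empty_subset _) (fun _ => Set.empty_subset _)
      (fun h => by simpa using congrFun h ())
    refine ⟨γ true, γ false, ?_, ?_, ?_⟩
    · intro h
      exact hne (funext fun _ => h)
    · exact Set.eq_univ_of_univ_subset (hγ true)
    · exact Set.eq_univ_of_univ_subset (hγ false)
  · rintro ⟨c₁, c₂, hc, h1, h2⟩ A B F G α β hα hβ hne
    obtain ⟨a₀, ha₀⟩ := Function.ne_iff.mp hne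
    classical
    refine ⟨fun b => if b = α a₀ then c₁ else c₂, ?_, ?_⟩
    · intro b
      by_cases hb : b = α a₀ <;> simp [hb, h1, h2]
    · intro h
      have := congrFun h a₀
      simp only [Function.comp_apply, if_pos rfl,
        if_neg (fun h' : β a₀ = α a₀ => ha₀ h'.symm)] at this
      exact hc this
end

section
/- A soft morphism α from a soft set (A, F) to a soft set (B, G) over the universe U is an epimorphism in the category of soft sets over U (i.e., for every soft set (C, H) over U and all soft morphisms β, γ from (B, G) to (C, H), β ∘ α = γ ∘ α implies β = γ) if and only if α is surjective. -/
/-- A soft morphism `α : (A, F) → (B, G)` is an epimorphism in the category of soft sets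
over `U` if and only if `α` is surjective. -/
theorem softMorphism_epi_iff_surjective {U A B : Type} (F : A → Set U) (G : B → Set U)
    (α : A → B) (hα : IsSoftMorphism F G α) :
    (∀ (C : Type) (H : C → Set U) (β γ : B → C),
        IsSoftMorphism G H β → IsSoftMorphism G H γ → β ∘ α = γ ∘ α → β = γ) ↔
      Function.Surjective α := by
  constructor
  · intro h b
    have := h Prop (fun _ => Set.univ) (fun b => b ∈ Set.range α) (fun _ => True)
      (fun _ _ _ => trivial) (fun _ _ _ => trivial)
      (funext fun a => by simp)
    have hb : (b ∈ Set.range α) = True := congrFun this b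
    exact of_eq_true hb
  · intro hs C H β γ _ _ hcomp
    funext b
    obtain ⟨a, rfl⟩ := hs b
    exact congrFun hcomp a
end

section
/- In the category of soft sets over a universe U, a soft morphism α from a soft set (A, F) to a soft set (B, G) is a bimorphism (i.e., both a monomorphism and an epimorphism, where α is a monomorphism means that for every soft set (C, H) over U and all soft morphisms β, γ from (C, H) to (A, F), α ∘ β = α ∘ γ implies β = γ, and α is an epimorphism means that for every soft set (C, H) over U and all soft morphisms β, γ from (B, G) to (C, H), β ∘ α = γ ∘ α implies β = γ) if and only if α is bijective. -/
/-- A soft morphism `α : (A, F) → (B, G)` is a bimorphism (both a monomorphism and an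
epimorphism) in the category of soft sets over `U` if and only if `α` is bijective. -/
theorem softMorphism_bimorphism_iff_bijective {U A B : Type} (F : A → Set U) (G : B → Set U)
    (α : A → B) (hα : IsSoftMorphism F G α) :
    ((∀ (C : Type) (H : C → Set U) (β γ : C → A),
        IsSoftMorphism H F β → IsSoftMorphism H F γ → α ∘ β = α ∘ γ → β = γ) ∧
     (∀ (C : Type) (H : C → Set U) (β γ : B → C),
        IsSoftMorphism G H β → IsSoftMorphism G H γ → β ∘ α = γ ∘ α → β = γ)) ↔
      Function.Bijective α := by
  constructor
  · rintro ⟨hmono, hepi⟩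
    constructor
    · intro a₁ a₂ hEq
      have := hmono Unit (fun _ => (∅ : Set U)) (fun _ => a₁) (fun _ => a₂)
        (fun _ => Set.empty_subset _) (fun _ => Set.empty_subset _)
        (by funext u; simpa using hEq)
      exact congrFun this ()
    · intro b
      by_contra hb
      push_neg at hb
      have := hepi Prop (fun _ => (Set.univ : Set U)) (fun _ => True)
        (fun b' => ∃ a, α a = b')
        (fun _ => Set.subset_univ _) (fun _ => Set.subset_univ _)
        (by funext a; simp only [Function.comp]; exact eq_true ⟨a, rfl⟩ |>.symm)
      have h2 := congrFun this b
      exact (hb ((h2 ▸ trivial : ∃ a, α a = b).choose))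
        ((h2 ▸ trivial : ∃ a, α a = b).choose_spec)
  · rintro ⟨hinj, hsurj⟩
    constructor
    · intro C H β γ _ _ h
      funext c
      exact hinj (congrFun h c)
    · intro C H β γ _ _ h
      funext b
      obtain ⟨a, rfl⟩ := hsurj b
      exact congrFun h a
end
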